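/- arXiv:2305.12996 — 3 statements merged into one kernel-verified Lean document; each statement's English description precedes it below -/
import Mathlib

section
/- Let Π be a probability measure on ℝ^d, let L ∈ ℕ, and for each level l ∈ {0,…,L} let m_l < n_l be natural numbers, let X⁰_l = (x_{l,1},…,x_{l,m_l}) be fixed points in ℝ^d, and let k₀^l : ℝ^d × ℝ^d → ℝ be a measurable kernel such that for every y ∈ ℝ^d the function x ↦ k₀^l(x,y) is Π-integrable with ∫ k₀^l(x,y) dΠ(x) = 0. Suppose the m_l × m_l matrix K_l with entries (K_l)_{ij} = k₀^l(x_{l,i}, x_{l,j}) is invertible and 𝟙ᵀ K_l⁻¹ 𝟙 ≠ 0, where 𝟙 is the all-ones vector. Let f₋₁ := 0 and f_0,…,f_L : ℝ^d → ℝ be measurable with each difference f_l − f_{l−1} Π-integrable. Let X¹_l = (x_{l,m_l+1},…,x_{l,n_l}) be random points, each with marginal distribution Π and such that k₀^l(x_{l,i},x_{l,j}) and (f_l − f_{l−1})(x_{l,i}) are integrable for i > m_l. Define a_l = 𝟙ᵀ K_l⁻¹ g_l(X⁰_l) / (𝟙ᵀ K_l⁻¹ 𝟙) where g_l := f_l −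 f_{l−1} and g_l(X⁰_l) denotes the vector of evaluations of g_l at the points of X⁰_l. Then the standard multilevel control functional estimator Σ_{l=0}^{L} (n_l − m_l)^{-1} 𝟙ᵀ { g_l(X¹_l) − k₀^l(X¹_l, X⁰_l) K_l⁻¹ [ g_l(X⁰_l) − a_l 𝟙 ] } has expectation equal to ∫ f_L dΠ, where k₀^l(X¹_l, X⁰_l) is the (n_l − m_l) × m_l matrix with entries k₀^l(x_{l,m_l+i}, x_{l,j}). -/
open MeasureTheory Matrix Finset

/-- Unbiasedness of the standard multilevel control functional estimator. -/
theorem multilevel_control_functional_unbiased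
    {d : ℕ} (μ : Measure (Fin d → ℝ)) [IsProbabilityMeasure μ]
    {Ω : Type*} [MeasurableSpace Ω] (P : Measure Ω) [IsProbabilityMeasure P]
    (L : ℕ) (m n : ℕ → ℕ) (hmn : ∀ l ≤ L, m l < n l)
    (X0 : (l : ℕ) → Fin (m l) → (Fin d → ℝ))
    (k₀ : ℕ → (Fin d → ℝ) → (Fin d → ℝ) → ℝ)
    (hk_meas : ∀ l ≤ L, ∀ y, Measurable fun x => k₀ l x y)
    (hk_int : ∀ l ≤ L, ∀ y, Integrable (fun x => k₀ l x y) μ)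
    (hk_zero : ∀ l ≤ L, ∀ y, ∫ x, k₀ l x y ∂μ = 0)
    (K : (l : ℕ) → Matrix (Fin (m l)) (Fin (m l)) ℝ)
    (hK : ∀ l ≤ L, K l = Matrix.of fun i j => k₀ l (X0 l i) (X0 l j))
    (hKunit : ∀ l ≤ L, IsUnit (K l))
    (hone : ∀ l ≤ L, (1 : Fin (m l) → ℝ) ⬝ᵥ ((K l)⁻¹ *ᵥ (1 : Fin (m l) → ℝ)) ≠ 0)
    (f : ℕ → (Fin d → ℝ) → ℝ)
    (hf_meas : ∀ l ≤ L, Measurable (f l))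
    -- g l is the increment f_l - f_{l-1}, with the convention f_{-1} := 0
    (g : ℕ → (Fin d → ℝ) → ℝ)
    (hg : ∀ l, g l = fun x => f l x - if l = 0 then 0 else f (l - 1) x)
    (hg_int : ∀ l ≤ L, Integrable (g l) μ)
    (X1 : (l : ℕ) → Fin (n l - m l) → Ω → (Fin d → ℝ))
    (hX1_meas : ∀ l ≤ L, ∀ i, Measurable (X1 l i))
    (hX1_law : ∀ l ≤ L, ∀ i, Measure.map (X1 l i) P = μ)
    (hk_int' : ∀ l ≤ L, ∀ i j, Integrable (fun ω => k₀ l (X1 l i ω) (X0 l j)) P)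
    (hg_int' : ∀ l ≤ L, ∀ i, Integrable (fun ω => g l (X1 l i ω)) P)
    (a : ℕ → ℝ)
    (ha : ∀ l ≤ L, a l =
        ((1 : Fin (m l) → ℝ) ⬝ᵥ ((K l)⁻¹ *ᵥ fun j => g l (X0 l j))) /
        ((1 : Fin (m l) → ℝ) ⬝ᵥ ((K l)⁻¹ *ᵥ (1 : Fin (m l) → ℝ)))) :
    ∫ ω, ∑ l ∈ Finset.range (L + 1),
        ((n l : ℝ) - m l)⁻¹ *
          ∑ i : Fin (n l - m l),
            (g l (X1 l i ω) -
              ∑ j : Fin (m l),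
                k₀ l (X1 l i ω) (X0 l j) * ((K l)⁻¹ *ᵥ fun j => g l (X0 l j) - a l) j) ∂P
      = ∫ x, f L x ∂μ := by

  -- change of variables helper
  have hmap : ∀ l ≤ L, ∀ i (φ : (Fin d → ℝ) → ℝ), Integrable φ μ →
      ∫ ω, φ (X1 l i ω) ∂P = ∫ x, φ x ∂μ := by
    intro l hl i φ hφ
    rw [← hX1_law l hl i, integral_map (hX1_meas l hl i).aemeasurable]
    rw [hX1_law l hl i]; exact hφ.1
  have hint : ∀ l ≤ L, ∀ i : Fin (n l - m l), Integrable (fun ω =>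
      g l (X1 l i ω) - ∑ j : Fin (m l),
        k₀ l (X1 l i ω) (X0 l j) * ((K l)⁻¹ *ᵥ fun j => g l (X0 l j) - a l) j) P := by
    intro l hl i
    exact (hg_int' l hl i).sub (integrable_finset_sum _ fun j _ =>
      (hk_int' l hl i j).mul_const _)
  have key : ∀ l ∈ Finset.range (L + 1),
      ∫ ω, ((n l : ℝ) - m l)⁻¹ *
        ∑ i : Fin (n l - m l),
          (g l (X1 l i ω) - ∑ j : Fin (m l),
            k₀ l (X1 l i ω) (X0 l j) * ((K l)⁻¹ *ᵥ fun j => g l (X0 l j) - a l) j) ∂P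
      = ∫ x, g l x ∂μ := by
    intro l hl
    rw [Finset.mem_range, Nat.lt_succ_iff] at hl
    rw [integral_const_mul, integral_finset_sum _ (fun i _ => hint l hl i)]
    have h1 : ∀ i : Fin (n l - m l),
        ∫ ω, (g l (X1 l i ω) - ∑ j : Fin (m l),
          k₀ l (X1 l i ω) (X0 l j) * ((K l)⁻¹ *ᵥ fun j => g l (X0 l j) - a l) j) ∂P
        = ∫ x, g l x ∂μ := by
      intro i
      rw [integral_sub (hg_int' l hl i) (integrable_finset_sum _ fun j _ =>
        (hk_int' l hl i j).mul_const _),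
        integral_finset_sum _ (fun j _ => (hk_int' l hl i j).mul_const _),
        hmap l hl i _ (hg_int l hl)]
      have h0 : ∀ j : Fin (m l), ∫ ω, k₀ l (X1 l i ω) (X0 l j) *
          ((K l)⁻¹ *ᵥ fun j => g l (X0 l j) - a l) j ∂P = 0 := by
        intro j
        rw [integral_mul_const, hmap l hl i _ (hk_int l hl (X0 l j)),
          hk_zero l hl (X0 l j), zero_mul]
      simp [h0]
    rw [Finset.sum_congr rfl fun i _ => h1 i, Finset.sum_const, Finset.card_univ,
      Fintype.card_fin, nsmul_eq_mul]
    have hcast : ((n l : ℝ) - m l) = ((n l - m l : ℕ) : ℝ) := by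
      rw [Nat.cast_sub (hmn l hl).le]
    have hne : ((n l - m l : ℕ) : ℝ) ≠ 0 := by
      have := hmn l hl
      exact Nat.cast_ne_zero.mpr (Nat.sub_ne_zero_of_lt this)
    rw [hcast, inv_mul_cancel_left₀ hne]
  rw [integral_finset_sum _ (fun l hl => by
    rw [Finset.mem_range, Nat.lt_succ_iff] at hl
    exact (integrable_finset_sum _ fun i _ => hint l hl i).const_mul _),
    Finset.sum_congr rfl key]
  -- telescoping
  have htel : ∀ N, (fun x => ∑ l ∈ Finset.range (N + 1), g l x) = f N := by
    intro N
    induction N with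
    | zero => funext x; simp [hg 0]
    | succ N ih =>
      funext x
      have := congrFun ih x
      simp only [Finset.sum_range_succ, this, hg (N + 1)]
      simp
  rw [← integral_finset_sum _ (fun l hl => hg_int l (by
      rw [Finset.mem_range, Nat.lt_succ_iff] at hl; exact hl))]
  exact integral_congr_ae (Filter.EventuallyEq.of_eq (htel L))
end

section
/- Let Π be a probability measure on ℝ^d, let m < n, let X⁰ = (x_1,…,x_m) be fixed points in ℝ^d, and let k₀ : ℝ^d × ℝ^d → ℝ be a measurable kernel such that for every y ∈ ℝ^d the function x ↦ k₀(x,y) is Π-integrable with ∫ k₀(x,y) dΠ(x) = 0. Suppose the m × m matrix K with entries K_{ij} = k₀(x_i, x_j) is invertible and 𝟙ᵀ K⁻¹ 𝟙 ≠ 0. Let f : ℝ^d → ℝ be Π-integrable, and let X¹ = (x_{m+1},…,x_n) be random points, each with marginal distribution Π and such that k₀(x_{m+i}, x_j) and f(x_{m+i}) are integrable. Define a = 𝟙ᵀ K⁻¹ f(X⁰) / (𝟙ᵀ K⁻¹ 𝟙), where f(X⁰) is the vector of evaluations of f at x_1,…,x_m. Then the standard control functional estimator (n − m)^{-1} 𝟙ᵀ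 { f(X¹) − k₀(X¹, X⁰) K⁻¹ [ f(X⁰) − a 𝟙 ] } has expectation equal to ∫ f dΠ, where k₀(X¹, X⁰) is the (n−m) × m matrix with entries k₀(x_{m+i}, x_j). -/
open MeasureTheory Matrix Finset

/-- Unbiasedness of the standard control functional estimator. -/
theorem control_functional_unbiased
    {d : ℕ} (μ : Measure (Fin d → ℝ)) [IsProbabilityMeasure μ]
    {Ω : Type*} [MeasurableSpace Ω] (P : Measure Ω) [IsProbabilityMeasure P]
    (m n : ℕ) (hmn : m < n)
    (X0 : Fin m → (Fin d → ℝ))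
    (k₀ : (Fin d → ℝ) → (Fin d → ℝ) → ℝ)
    (hk_meas : ∀ y, Measurable fun x => k₀ x y)
    (hk_int : ∀ y, Integrable (fun x => k₀ x y) μ)
    (hk_zero : ∀ y, ∫ x, k₀ x y ∂μ = 0)
    (K : Matrix (Fin m) (Fin m) ℝ)
    (hK : K = Matrix.of fun i j => k₀ (X0 i) (X0 j))
    (hKunit : IsUnit K)
    (hone : (1 : Fin m → ℝ) ⬝ᵥ (K⁻¹ *ᵥ (1 : Fin m → ℝ)) ≠ 0)
    (f : (Fin d → ℝ) → ℝ)
    (hf_meas : Measurable f) (hf_int : Integrable f μ)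
    (X1 : Fin (n - m) → Ω → (Fin d → ℝ))
    (hX1_meas : ∀ i, Measurable (X1 i))
    (hX1_law : ∀ i, Measure.map (X1 i) P = μ)
    (hk_int' : ∀ i j, Integrable (fun ω => k₀ (X1 i ω) (X0 j)) P)
    (hf_int' : ∀ i, Integrable (fun ω => f (X1 i ω)) P)
    (a : ℝ)
    (ha : a = ((1 : Fin m → ℝ) ⬝ᵥ (K⁻¹ *ᵥ fun j => f (X0 j))) /
              ((1 : Fin m → ℝ) ⬝ᵥ (K⁻¹ *ᵥ (1 : Fin m → ℝ)))) :
    ∫ ω, ((n : ℝ) - m)⁻¹ *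
        ∑ i : Fin (n - m),
          (f (X1 i ω) -
            ∑ j : Fin m, k₀ (X1 i ω) (X0 j) * (K⁻¹ *ᵥ fun j => f (X0 j) - a) j) ∂P
      = ∫ x, f x ∂μ := by

  set v : Fin m → ℝ := K⁻¹ *ᵥ fun j => f (X0 j) - a with hv
  have hfi : ∀ i : Fin (n - m), ∫ ω, f (X1 i ω) ∂P = ∫ x, f x ∂μ := fun i => by
    rw [← hX1_law i,
      integral_map (hX1_meas i).aemeasurable hf_meas.aestronglyMeasurable]
  have hki : ∀ (i : Fin (n - m)) (j : Fin m), ∫ ω, k₀ (X1 i ω) (X0 j) ∂P = 0 := fun i j => by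
    rw [← hk_zero (X0 j), ← hX1_law i,
      integral_map (hX1_meas i).aemeasurable (hk_meas (X0 j)).aestronglyMeasurable]
  have hterm : ∀ i : Fin (n - m),
      Integrable (fun ω => f (X1 i ω) - ∑ j : Fin m, k₀ (X1 i ω) (X0 j) * v j) P :=
    fun i => (hf_int' i).sub (integrable_finset_sum _ fun j _ => (hk_int' i j).mul_const _)
  rw [integral_const_mul, integral_finset_sum _ fun i _ => hterm i]
  have hsum : ∀ i : Fin (n - m),
      ∫ ω, (f (X1 i ω) - ∑ j : Fin m, k₀ (X1 i ω) (X0 j) * v j) ∂P = ∫ x, f x ∂μ := by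
    intro i
    rw [integral_sub (hf_int' i) (integrable_finset_sum _ fun j _ => (hk_int' i j).mul_const _),
      integral_finset_sum _ fun j _ => (hk_int' i j).mul_const _, hfi i]
    have : ∀ j : Fin m, ∫ ω, k₀ (X1 i ω) (X0 j) * v j ∂P = 0 := fun j => by
      rw [integral_mul_const, hki i j, zero_mul]
    simp [this]
  simp only [hsum, Finset.sum_const, Finset.card_univ, Fintype.card_fin, nsmul_eq_mul]
  rw [← mul_assoc, Nat.cast_sub hmn.le, inv_mul_cancel₀, one_mul]
  have : (m : ℝ) < n := by exact_mod_cast hmn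
  linarith
end

section
/- Let Q = [a_1,b_1] × ⋯ × [a_d,b_d] ⊂ ℝ^d be a closed box with a_i < b_i, let π : ℝ^d → ℝ be continuously differentiable with π(x) > 0 for all x ∈ Q, and let k : ℝ^d × ℝ^d → ℝ be twice continuously differentiable. Fix y ∈ Q and suppose that for every x ∈ ∂Q one has π(x) k(x,y) = 0 and π(x) (∇_{x'} k)(x, x')|_{x'=y} = 0 (the gradient of k in its second argument evaluated at (x,y)). Define the Stein kernel k₀(x,y) = ∇_x · ∇_{x'} k(x,y) + ⟨∇ log π(x), ∇_{x'} k(x,y)⟩ + ⟨∇ log π(y), ∇_x k(x,y)⟩ + ⟨∇ log π(x), ∇ log π(y)⟩ k(x,y), where ∇_x denotes the gradient in the first argument, ∇_{x'} the gradient in the second argument, and ∇_x · ∇_{x'} k = Σ_{i=1}^{d} ∂²k/∂x_i ∂x'_i. Then ∫_Q k₀(x,y) π(x) dx = 0. -/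
open MeasureTheory Finset

section Aux

variable {n : ℕ}

private lemma frontFace_mem_frontier (a b : Fin (n + 1) → ℝ) (hab : ∀ i, a i < b i)
    (i : Fin (n + 1)) (c : ℝ) (hc : c = a i ∨ c = b i)
    {x : Fin n → ℝ} (hx : x ∈ Set.Icc (a ∘ i.succAbove) (b ∘ i.succAbove)) :
    i.insertNth c x ∈ frontier (Set.Icc a b) := by
  have hmem : i.insertNth c x ∈ Set.Icc a b := by
    refine Fin.insertNth_mem_Icc.2 ⟨?_, hx⟩
    rcases hc with rfl | rfl
    · exact ⟨le_rfl, (hab i).le⟩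
    · exact ⟨(hab i).le, le_rfl⟩
  rw [isClosed_Icc.frontier_eq]
  refine ⟨hmem, fun hint => ?_⟩
  rw [← Set.pi_univ_Icc, interior_pi_set Set.finite_univ] at hint
  have := hint i (Set.mem_univ i)
  simp only [interior_Icc, Set.mem_Ioo, Fin.insertNth_apply_same] at this
  rcases hc with rfl | rfl
  · exact lt_irrefl _ this.1
  · exact lt_irrefl _ this.2

end Aux

/-- The Stein kernel `k₀` obtained from a `C²` base kernel `k` and a positive `C¹`
density `π` via the Langevin Stein operator has `Π`-mean zero over a closed box,
provided the relevant boundary terms vanish.  Gradients are spelled out via `fderiv`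
applied to the coordinate directions `Pi.single i 1`. -/
theorem stein_kernel_mean_zero_on_box
    {d : ℕ} (a b : Fin d → ℝ) (hab : ∀ i, a i < b i)
    (π : (Fin d → ℝ) → ℝ) (hπ : ContDiff ℝ 1 π)
    (hπ_pos : ∀ x ∈ Set.Icc a b, 0 < π x)
    (k : (Fin d → ℝ) → (Fin d → ℝ) → ℝ)
    (hk : ContDiff ℝ 2 (Function.uncurry k))
    (y : Fin d → ℝ) (hy : y ∈ Set.Icc a b)
    (h_bdry₁ : ∀ x ∈ frontier (Set.Icc a b), π x * k x y = 0)
    (h_bdry₂ : ∀ x ∈ frontier (Set.Icc a b), ∀ i : Fin d,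
        π x * fderiv ℝ (k x) y (Pi.single i 1) = 0) :
    ∫ x in Set.Icc a b,
        ((∑ i : Fin d,
            fderiv ℝ (fun z => fderiv ℝ (k z) y (Pi.single i 1)) x (Pi.single i 1)) +
          (∑ i : Fin d,
            (fderiv ℝ π x (Pi.single i 1) / π x) * fderiv ℝ (k x) y (Pi.single i 1)) +
          (∑ i : Fin d,
            (fderiv ℝ π y (Pi.single i 1) / π y) * fderiv ℝ (fun z => k z y) x (Pi.single i 1)) +
          (∑ i : Fin d,
            (fderiv ℝ π x (Pi.single i 1) / π x) * (fderiv ℝ π y (Pi.single i 1) / π y)) * k x y) *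
        π x
      = 0 := by
  cases d with
  | zero => simp
  | succ n =>
  -- notation
  set e : Fin (n + 1) → (Fin (n + 1) → ℝ) := fun i => Pi.single i 1 with he
  have hk1 : ContDiff ℝ 1 (Function.uncurry k) := hk.of_le one_le_two
  have hkd : Differentiable ℝ (Function.uncurry k) := hk1.differentiable one_ne_zero
  have hDk : ContDiff ℝ 1 (fderiv ℝ (Function.uncurry k)) :=
    hk.fderiv_right (le_refl 2)
  -- the curried derivatives
  have hky : ∀ x : Fin (n + 1) → ℝ, HasFDerivAt (k x)
      ((fderiv ℝ (Function.uncurry k) (x, y)).comp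
        (ContinuousLinearMap.inr ℝ (Fin (n + 1) → ℝ) (Fin (n + 1) → ℝ))) y := fun x =>
    (hkd (x, y)).hasFDerivAt.comp y (hasFDerivAt_prodMk_right x y)
  have hkx : ∀ x : Fin (n + 1) → ℝ, HasFDerivAt (fun z => k z y)
      ((fderiv ℝ (Function.uncurry k) (x, y)).comp
        (ContinuousLinearMap.inl ℝ (Fin (n + 1) → ℝ) (Fin (n + 1) → ℝ))) x := fun x =>
    by have h := (hkd (x, y)).hasFDerivAt.comp x (hasFDerivAt_prodMk_left (𝕜 := ℝ) x y); exact h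
  have hfdky : ∀ (x : Fin (n + 1) → ℝ) (v), fderiv ℝ (k x) y v
      = fderiv ℝ (Function.uncurry k) (x, y) (0, v) := fun x v => by
    rw [(hky x).fderiv]; rfl
  have hfdkx : ∀ (x : Fin (n + 1) → ℝ) (v), fderiv ℝ (fun z => k z y) x v
      = fderiv ℝ (Function.uncurry k) (x, y) (v, 0) := fun x v => by
    rw [(hkx x).fderiv]; rfl
  -- components of the vector field
  set G : Fin (n + 1) → (Fin (n + 1) → ℝ) → ℝ :=
    fun i x => fderiv ℝ (Function.uncurry k) (x, y) (0, e i) with hGdef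
  set K : (Fin (n + 1) → ℝ) → ℝ := fun x => k x y with hKdef
  set c : Fin (n + 1) → ℝ := fun i => fderiv ℝ π y (e i) / π y with hcdef
  set f : Fin (n + 1) → (Fin (n + 1) → ℝ) → ℝ :=
    fun i x => π x * G i x + c i * (π x * K x) with hfdef
  have hxy : ContDiff ℝ 1 (fun x : Fin (n + 1) → ℝ => (x, y)) :=
    contDiff_id.prodMk contDiff_const
  have hGc : ∀ i, ContDiff ℝ 1 (G i) := fun i =>
    (ContinuousLinearMap.apply ℝ ℝ ((0 : Fin (n + 1) → ℝ), e i)).contDiff.comp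
      (hDk.comp hxy)
  have hKc : ContDiff ℝ 1 K := hk1.comp hxy
  have hfc : ∀ i, ContDiff ℝ 1 (f i) := fun i =>
    ((hπ.mul (hGc i)).add (contDiff_const.mul (hπ.mul hKc)))
  -- explicit derivative of f i
  have hf' : ∀ (i) (x : Fin (n + 1) → ℝ), HasFDerivAt (f i)
      (π x • fderiv ℝ (G i) x + G i x • fderiv ℝ π x +
        c i • (π x • fderiv ℝ K x + K x • fderiv ℝ π x)) x := by
    intro i x
    have hπ' : HasFDerivAt π (fderiv ℝ π x) x :=
      (hπ.differentiable one_ne_zero x).hasFDerivAt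
    have hG' : HasFDerivAt (G i) (fderiv ℝ (G i) x) x :=
      ((hGc i).differentiable one_ne_zero x).hasFDerivAt
    have hK' : HasFDerivAt K (fderiv ℝ K x) x :=
      (hKc.differentiable one_ne_zero x).hasFDerivAt
    exact (hπ'.mul hG').add ((hπ'.mul hK').const_mul (c i))
  set f' : Fin (n + 1) → (Fin (n + 1) → ℝ) → (Fin (n + 1) → ℝ) →L[ℝ] ℝ :=
    fun i x => π x • fderiv ℝ (G i) x + G i x • fderiv ℝ π x +
        c i • (π x • fderiv ℝ K x + K x • fderiv ℝ π x) with hf'def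
  -- divergence theorem
  have hdiv := MeasureTheory.integral_divergence_of_hasFDerivAt_off_countable'
      a b (fun i => (hab i).le) f f' ∅ Set.countable_empty
      (fun i => (hfc i).continuous.continuousOn)
      (fun x _ i => hf' i x)
      ?_
  · -- boundary terms vanish
    have hbd : ∀ (i : Fin (n + 1)) (cc : ℝ), cc = a i ∨ cc = b i →
        (∫ x in Set.Icc (a ∘ i.succAbove) (b ∘ i.succAbove), f i (i.insertNth cc x)) = 0 := by
      intro i cc hcc
      rw [setIntegral_congr_fun measurableSet_Icc (g := fun _ => (0 : ℝ))
        (fun x hx => ?_), integral_zero]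
      have hfr := frontFace_mem_frontier a b hab i cc hcc hx
      have h1 := h_bdry₁ _ hfr
      have h2 := h_bdry₂ _ hfr i
      rw [hfdky] at h2
      have hz1 : π (i.insertNth cc x) * G i (i.insertNth cc x) = 0 := h2
      have hz2 : π (i.insertNth cc x) * K (i.insertNth cc x) = 0 := h1
      show π _ * G i _ + c i * (π _ * K _) = 0
      rw [hz1, hz2, mul_zero, add_zero]
    rw [show (∑ i : Fin (n + 1),
        ((∫ x in Set.Icc (a ∘ i.succAbove) (b ∘ i.succAbove), f i (i.insertNth (b i) x)) -
          ∫ x in Set.Icc (a ∘ i.succAbove) (b ∘ i.succAbove), f i (i.insertNth (a i) x))) = 0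
      from Finset.sum_eq_zero fun i _ => by
        rw [hbd i (b i) (Or.inr rfl), hbd i (a i) (Or.inl rfl), sub_zero]] at hdiv
    rw [← hdiv]
    apply setIntegral_congr_fun measurableSet_Icc
    intro x hx
    have hπx : π x ≠ 0 := (hπ_pos x hx).ne'
    have hGfun : ∀ i : Fin (n + 1),
        (fun z => fderiv ℝ (k z) y (e i)) = G i := fun i => funext fun z => hfdky z (e i)
    have hGapp : ∀ (i : Fin (n + 1)), fderiv ℝ (k x) y (e i) = G i x :=
      fun i => hfdky x (e i)
    simp only [show ∀ i : Fin (n + 1), (fun z => fderiv ℝ (k z) y (Pi.single i 1)) = G i from hGfun,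
      show ∀ i : Fin (n + 1), fderiv ℝ (k x) y (Pi.single i 1) = G i x from hGapp]
    have key : ∀ i : Fin (n + 1), f' i x (e i)
        = (fderiv ℝ (G i) x (e i) + fderiv ℝ π x (e i) / π x * G i x
            + c i * fderiv ℝ K x (e i)
            + fderiv ℝ π x (e i) / π x * c i * k x y) * π x := by
      intro i
      have hKxx : K x = k x y := rfl
      simp only [hf'def, ContinuousLinearMap.add_apply, ContinuousLinearMap.smul_apply,
        smul_eq_mul, ← hKxx]
      field_simp
      ring
    rw [Finset.sum_congr rfl fun i _ => key i, ← Finset.sum_mul]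
    congr 1
    simp only [Finset.sum_add_distrib, ← Finset.sum_mul]
    rfl
  · -- integrability of the divergence
    apply ContinuousOn.integrableOn_compact isCompact_Icc
    apply Continuous.continuousOn
    apply continuous_finset_sum
    intro i _
    have : Continuous (fun x => f' i x) := by
      have h1 : Continuous (fderiv ℝ (G i)) :=
        (((hGc i).fderiv_right (m := 0) le_rfl)).continuous
      have h2 : Continuous (fderiv ℝ π) :=
        ((hπ.fderiv_right (m := 0) le_rfl)).continuous
      have h3 : Continuous (fderiv ℝ K) :=
        ((hKc.fderiv_right (m := 0) le_rfl)).continuous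
      exact (((hπ.continuous.smul h1).add ((((hGc i).continuous)).smul h2)).add
        ((continuous_const (y := c i)).smul ((hπ.continuous.smul h3).add ((hKc.continuous).smul h2))))
    exact this.clm_apply continuous_const
end
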